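/- arXiv:2305.19802 — 2 statements merged into one kernel-verified Lean document; each statement's English description precedes it below -/
import Mathlib

section
/- Let G be the octahedron graph (complete tripartite graph K_{2,2,2}): the simple graph on vertex set {1, 2, 3, 4, 5, 6} in which two distinct vertices are adjacent unless they form one of the pairs {1,2}, {3,5}, {4,6}. Then G admits exactly two minimum edge clique covers, namely C₁ = {{1,3,4}, {1,5,6}, {2,3,6}, {2,4,5}} and C₂ = {{1,3,6}, {1,4,5}, {2,3,4}, {2,5,6}}: every edge clique cover of G of cardinality 4 equals C₁ or C₂, and no edge clique cover has cardinality less than 4. In particular, G does not admit a unique minimum edge clique cover. -/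
set_option maxRecDepth 40000

/-- A family `C` of vertex subsets is an edge clique cover of the simple graph `U` if every
member of `C` is a clique of `U` and every edge of `U` has both endpoints in some member. -/
def IsEdgeCliqueCover {V : Type*} (U : SimpleGraph V) (C : Finset (Finset V)) : Prop :=
  (∀ c ∈ C, U.IsClique (c : Set V)) ∧ ∀ ⦃i j : V⦄, U.Adj i j → ∃ c ∈ C, i ∈ c ∧ j ∈ c

/-! ### Auxiliary concrete definitions -/

def OctaBad : Finset (Finset (Fin 6)) := {{0, 1}, {2, 4}, {3, 5}}

/-- The concrete octahedron graph. -/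
def G0 : SimpleGraph (Fin 6) where
  Adj i j := i ≠ j ∧ ({i, j} : Finset (Fin 6)) ∉ OctaBad
  symm := ⟨fun i j ⟨h1, h2⟩ => ⟨h1.symm, by rwa [Finset.pair_comm]⟩⟩
  loopless := ⟨fun i ⟨h, _⟩ => h rfl⟩

instance : DecidableRel G0.Adj := fun i j =>
  inferInstanceAs (Decidable (i ≠ j ∧ ({i, j} : Finset (Fin 6)) ∉ OctaBad))

/-- The eight triangles of the octahedron. -/
def t8 : Fin 8 → Finset (Fin 6) :=
  ![{0,2,3}, {0,2,5}, {0,3,4}, {0,4,5}, {1,2,3}, {1,2,5}, {1,3,4}, {1,4,5}]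

def C1v : Finset (Finset (Fin 6)) := {{0, 2, 3}, {0, 4, 5}, {1, 2, 5}, {1, 3, 4}}
def C2v : Finset (Finset (Fin 6)) := {{0, 2, 5}, {0, 3, 4}, {1, 2, 3}, {1, 4, 5}}

/-- Every clique of the octahedron is contained in one of the eight triangles. -/
lemma clique_sub : ∀ c : Finset (Fin 6), G0.IsClique ↑c → ∃ k : Fin 8, c ⊆ t8 k := by
  decide

/-- Every vertex of a triangle has a neighbour in that triangle. -/
lemma partner : ∀ k : Fin 8, ∀ i ∈ t8 k, ∃ j ∈ t8 k, G0.Adj i j := by decide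

lemma t8_inj : Function.Injective t8 := by decide

/-- Key enumeration: a subfamily of the eight triangles of cardinality at most `4`
covering all edges is `C1v` or `C2v`. -/
lemma cover4 : ∀ f : Fin 8 → Bool,
    (∀ i j : Fin 6, G0.Adj i j → ∃ k : Fin 8, f k = true ∧ i ∈ t8 k ∧ j ∈ t8 k) →
    (Finset.univ.filter (fun k => f k = true)).card ≤ 4 →
    (Finset.univ.filter (fun k => f k = true)).image t8 = C1v ∨
    (Finset.univ.filter (fun k => f k = true)).image t8 = C2v := by decide

lemma edge_unique1 : ∀ t ∈ C1v, ∀ t' ∈ C1v, ∀ i j : Fin 6, i ≠ j →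
    i ∈ t → j ∈ t → i ∈ t' → j ∈ t' → t = t' := by decide

lemma edge_unique2 : ∀ t ∈ C2v, ∀ t' ∈ C2v, ∀ i j : Fin 6, i ≠ j →
    i ∈ t → j ∈ t → i ∈ t' → j ∈ t' → t = t' := by decide

lemma C1v_card : C1v.card = 4 := by decide
lemma C2v_card : C2v.card = 4 := by decide

open Classical in
/-- A choice of triangle containing a given clique. -/
noncomputable def tri (c : Finset (Fin 6)) : Fin 8 :=
  if h : ∃ k : Fin 8, c ⊆ t8 k then h.choose else 0

lemma tri_spec {c : Finset (Fin 6)} (h : ∃ k : Fin 8, c ⊆ t8 k) : c ⊆ t8 (tri c) := by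
  rw [tri, dif_pos h]; exact h.choose_spec

/-- In any edge clique cover, no member contains a non-adjacent pair. -/
lemma no_bad_pair {D : Finset (Finset (Fin 6))} (hcl : ∀ c ∈ D, G0.IsClique (c : Set (Fin 6)))
    {c : Finset (Fin 6)} (hc : c ∈ D) {a b : Fin 6} (ha : a ∈ c) (hb : b ∈ c)
    (hne : a ≠ b) (hnadj : ¬ G0.Adj a b) : False :=
  hnadj (hcl c hc (Finset.mem_coe.mpr ha) (Finset.mem_coe.mpr hb) hne)

/-- Lower bound: any edge clique cover of the octahedron has at least four members. -/
lemma lower_bound (D : Finset (Finset (Fin 6))) (hD : IsEdgeCliqueCover G0 D) :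
    4 ≤ D.card := by
  obtain ⟨hcl, hcov⟩ := hD
  obtain ⟨c1, hc1, h01, h21⟩ := hcov (show G0.Adj 0 2 by decide)
  obtain ⟨c2, hc2, h02, h42⟩ := hcov (show G0.Adj 0 4 by decide)
  obtain ⟨c3, hc3, h13, h33⟩ := hcov (show G0.Adj 1 3 by decide)
  obtain ⟨c4, hc4, h14, h54⟩ := hcov (show G0.Adj 1 5 by decide)
  have h12 : c1 ≠ c2 := fun h =>
    no_bad_pair hcl hc1 h21 (h ▸ h42) (by decide) (by decide)
  have h13' : c1 ≠ c3 := fun h =>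
    no_bad_pair hcl hc1 h01 (h ▸ h13) (by decide) (by decide)
  have h14' : c1 ≠ c4 := fun h =>
    no_bad_pair hcl hc1 h01 (h ▸ h14) (by decide) (by decide)
  have h23 : c2 ≠ c3 := fun h =>
    no_bad_pair hcl hc2 h02 (h ▸ h13) (by decide) (by decide)
  have h24 : c2 ≠ c4 := fun h =>
    no_bad_pair hcl hc2 h02 (h ▸ h14) (by decide) (by decide)
  have h34 : c3 ≠ c4 := fun h =>
    no_bad_pair hcl hc3 h33 (h ▸ h54) (by decide) (by decide)
  have hsub : ({c1, c2, c3, c4} : Finset (Finset (Fin 6))) ⊆ D := by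
    intro x hx
    simp only [Finset.mem_insert, Finset.mem_singleton] at hx
    rcases hx with rfl | rfl | rfl | rfl <;> assumption
  have hcard : ({c1, c2, c3, c4} : Finset (Finset (Fin 6))).card = 4 := by
    rw [Finset.card_insert_of_notMem (by simp [h12, h13', h14']),
      Finset.card_insert_of_notMem (by simp [h23, h24]),
      Finset.card_insert_of_notMem (by simp [h34]), Finset.card_singleton]
  calc 4 = ({c1, c2, c3, c4} : Finset (Finset (Fin 6))).card := hcard.symm
    _ ≤ D.card := Finset.card_le_card hsub

/-- Uniqueness at cardinality four. -/
lemma card_four (D : Finset (Finset (Fin 6))) (hD : IsEdgeCliqueCover G0 D)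
    (hcard : D.card = 4) : D = C1v ∨ D = C2v := by
  classical
  obtain ⟨hcl, hcov⟩ := hD
  have hsub : ∀ c ∈ D, c ⊆ t8 (tri c) :=
    fun c hc => tri_spec (clique_sub c (hcl c hc))
  set g : Finset (Fin 6) → Finset (Fin 6) := fun c => t8 (tri c) with hg
  set E : Finset (Finset (Fin 6)) := D.image g with hE
  set f : Fin 8 → Bool := fun k => decide (t8 k ∈ E) with hf
  have hmem : ∀ k : Fin 8, f k = true ↔ t8 k ∈ E := by
    intro k; simp [hf]
  -- the filtered set's image is E
  have himg : (Finset.univ.filter (fun k => f k = true)).image t8 = E := by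
    apply Finset.Subset.antisymm
    · intro x hx
      obtain ⟨k, hk, rfl⟩ := Finset.mem_image.mp hx
      exact (hmem k).mp (Finset.mem_filter.mp hk).2
    · intro x hx
      obtain ⟨c, hc, rfl⟩ := Finset.mem_image.mp hx
      refine Finset.mem_image.mpr ⟨tri c, ?_, rfl⟩
      refine Finset.mem_filter.mpr ⟨Finset.mem_univ _, (hmem _).mpr ?_⟩
      exact Finset.mem_image.mpr ⟨c, hc, rfl⟩
  have hcovf : ∀ i j : Fin 6, G0.Adj i j → ∃ k : Fin 8, f k = true ∧ i ∈ t8 k ∧ j ∈ t8 k := by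
    intro i j hij
    obtain ⟨c, hc, hic, hjc⟩ := hcov hij
    refine ⟨tri c, (hmem _).mpr (Finset.mem_image.mpr ⟨c, hc, rfl⟩),
      hsub c hc hic, hsub c hc hjc⟩
  have hcardf : (Finset.univ.filter (fun k => f k = true)).card ≤ 4 := by
    have h1 : (Finset.univ.filter (fun k => f k = true)).card
        = ((Finset.univ.filter (fun k => f k = true)).image t8).card :=
      (Finset.card_image_of_injective _ t8_inj).symm
    rw [h1, himg]
    exact le_trans Finset.card_image_le (le_of_eq hcard)
  have hE12 : E = C1v ∨ E = C2v := by
    have := cover4 f hcovf hcardf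
    rwa [himg] at this
  -- |E| = 4, hence g is injective on D
  have hEcard : E.card = 4 := by
    rcases hE12 with h | h
    · rw [h]; exact C1v_card
    · rw [h]; exact C2v_card
  have hinj : Set.InjOn g ↑D := by
    apply Finset.card_image_iff.mp
    rw [← hE, hEcard, hcard]
  -- the edge-uniqueness property of E
  have huniq : ∀ t ∈ E, ∀ t' ∈ E, ∀ i j : Fin 6, i ≠ j →
      i ∈ t → j ∈ t → i ∈ t' → j ∈ t' → t = t' := by
    rcases hE12 with h | h
    · rw [h]; exact edge_unique1
    · rw [h]; exact edge_unique2
  -- every member of D equals its chosen triangle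
  have hDE : D ⊆ E := by
    intro c hc
    have hgE : g c ∈ E := Finset.mem_image.mpr ⟨c, hc, rfl⟩
    have htc : g c ⊆ c := by
      intro i hi
      obtain ⟨j, hj, hadj⟩ := partner (tri c) i hi
      obtain ⟨c', hc', hic', hjc'⟩ := hcov hadj
      have hgE' : g c' ∈ E := Finset.mem_image.mpr ⟨c', hc', rfl⟩
      have : g c = g c' :=
        huniq (g c) hgE (g c') hgE' i j hadj.1 hi hj
          (hsub c' hc' hic') (hsub c' hc' hjc')
      have hcc : c = c' := hinj hc hc' this
      rw [hcc]; exact hic'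
    have : c = g c := Finset.Subset.antisymm (hsub c hc) htc
    rw [this]; exact hgE
  have hDeq : D = E := Finset.eq_of_subset_of_card_le hDE (by rw [hEcard, hcard])
  rw [hDeq]; exact hE12

/-- The octahedron graph `K_{2,2,2}` (vertices `0,…,5` standing for `1,…,6`, adjacent unless
they form one of the pairs `{0,1}`, `{2,4}`, `{3,5}`) admits exactly two minimum edge clique
covers `C₁ ≠ C₂`: no edge clique cover has fewer than `4` cliques and every edge clique cover
of cardinality `4` equals `C₁` or `C₂`. In particular the minimum edge clique cover is not
unique. -/
theorem octahedron_exactly_two_minimum_eccs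
    (G : SimpleGraph (Fin 6))
    (hG : ∀ i j : Fin 6, G.Adj i j ↔ i ≠ j ∧
      ({i, j} : Finset (Fin 6)) ∉
        ({{0, 1}, {2, 4}, {3, 5}} : Finset (Finset (Fin 6))))
    (C₁ C₂ : Finset (Finset (Fin 6)))
    (hC₁ : C₁ = {{0, 2, 3}, {0, 4, 5}, {1, 2, 5}, {1, 3, 4}})
    (hC₂ : C₂ = {{0, 2, 5}, {0, 3, 4}, {1, 2, 3}, {1, 4, 5}}) :
    IsEdgeCliqueCover G C₁ ∧ IsEdgeCliqueCover G C₂ ∧ C₁ ≠ C₂ ∧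
      (∀ D : Finset (Finset (Fin 6)), IsEdgeCliqueCover G D → 4 ≤ D.card) ∧
      (∀ D : Finset (Finset (Fin 6)), IsEdgeCliqueCover G D → D.card = 4 →
        D = C₁ ∨ D = C₂) := by
  have hGG : G = G0 := by
    ext i j
    rw [hG]
    exact Iff.rfl
  subst hGG
  subst hC₁
  subst hC₂
  refine ⟨⟨by decide, by decide⟩, ⟨by decide, by decide⟩, by decide, lower_bound, ?_⟩
  intro D hD hc
  exact card_four D hD hc
end

section
/- Let U be a finite simple graph and let C be a minimum edge clique cover of U such that every member c of C contains a pure vertex, i.e., a vertex belonging to c and to no other member of C. Then C is the unique minimum edge clique cover of U: every edge clique cover of U of cardinality |C| equals C. -/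
/-- If `C` is a minimum edge clique cover of a finite simple graph `U` in which every member
contains a pure vertex (a vertex belonging to that member and to no other member of `C`), then
`C` is the unique minimum edge clique cover of `U`. -/
theorem pure_child_implies_unique_minimum_ecc
    {V : Type*} [Fintype V] [DecidableEq V] (U : SimpleGraph V)
    (C : Finset (Finset V))
    (hC : IsEdgeCliqueCover U C)
    (hCmin : ∀ D : Finset (Finset V), IsEdgeCliqueCover U D → C.card ≤ D.card)
    (hpure : ∀ c ∈ C, ∃ v ∈ c, ∀ c' ∈ C, v ∈ c' → c' = c) :
    ∀ D : Finset (Finset V), IsEdgeCliqueCover U D → D.card = C.card → D = C := by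
  intro D hD hcard
  obtain ⟨hCclique, hCcover⟩ := hC
  obtain ⟨hDclique, hDcover⟩ := hD
  choose v hvmem hvpure using hpure
  -- every member of C has a second vertex besides its pure vertex
  have hbig : ∀ c (hc : c ∈ C), ∃ w ∈ c, w ≠ v c hc := by
    intro c hc
    by_contra h
    push_neg at h
    have hecc : IsEdgeCliqueCover U (C.erase c) := by
      constructor
      · intro c' hc'; exact hCclique c' (Finset.mem_of_mem_erase hc')
      · intro i j hij
        obtain ⟨c', hc', hi, hj⟩ := hCcover hij
        refine ⟨c', Finset.mem_erase.mpr ⟨?_, hc'⟩, hi, hj⟩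
        rintro rfl
        exact hij.ne ((h i hi).trans (h j hj).symm)
    have h1 := hCmin _ hecc
    have h2 := Finset.card_erase_lt_of_mem hc
    omega
  -- two distinct members of C cannot have their pure vertices in a common member of D
  have key : ∀ c1 (h1 : c1 ∈ C) c2 (h2 : c2 ∈ C) d, d ∈ D →
      v c1 h1 ∈ d → v c2 h2 ∈ d → c1 = c2 := by
    intro c1 h1 c2 h2 d hd hv1 hv2
    by_contra hne
    have hvne : v c1 h1 ≠ v c2 h2 := by
      intro he
      have : v c1 h1 ∈ c2 := he ▸ hvmem c2 h2
      exact hne ((hvpure c1 h1 c2 h2 this).symm)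
    have hadj : U.Adj (v c1 h1) (v c2 h2) :=
      hDclique d hd (Finset.mem_coe.mpr hv1) (Finset.mem_coe.mpr hv2) hvne
    obtain ⟨c', hc', hi, hj⟩ := hCcover hadj
    have e1 : c' = c1 := hvpure c1 h1 c' hc' hi
    have e2 : c' = c2 := hvpure c2 h2 c' hc' hj
    exact hne (e1.symm.trans e2)
  -- choose for each c a member of D containing its pure vertex
  have hf : ∀ c (hc : c ∈ C), ∃ d, d ∈ D ∧ v c hc ∈ d := by
    intro c hc
    obtain ⟨w, hw, hwne⟩ := hbig c hc
    have hadj : U.Adj (v c hc) w :=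
      hCclique c hc (Finset.mem_coe.mpr (hvmem c hc)) (Finset.mem_coe.mpr hw) (Ne.symm hwne)
    obtain ⟨d, hd, hvd, _⟩ := hDcover hadj
    exact ⟨d, hd, hvd⟩
  choose f hfD hfv using hf
  have hinj : ∀ c1 c2 (h1 : c1 ∈ C) (h2 : c2 ∈ C), f c1 h1 = f c2 h2 → c1 = c2 := by
    intro c1 c2 h1 h2 he
    exact key c1 h1 c2 h2 (f c2 h2) (hfD c2 h2) (he ▸ hfv c1 h1) (hfv c2 h2)
  have hsurj := Finset.surj_on_of_inj_on_of_card_le f hfD hinj (le_of_eq hcard)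
  -- f c = c
  have hfc : ∀ c (hc : c ∈ C), f c hc = c := by
    intro c hc
    apply Finset.Subset.antisymm
    · intro x hx
      by_cases hxv : x = v c hc
      · rw [hxv]; exact hvmem c hc
      · have hadj : U.Adj (v c hc) x :=
          hDclique _ (hfD c hc) (Finset.mem_coe.mpr (hfv c hc)) (Finset.mem_coe.mpr hx)
            (Ne.symm hxv)
        obtain ⟨c', hc', h1, h2⟩ := hCcover hadj
        have : c' = c := hvpure c hc c' hc' h1
        exact this ▸ h2
    · intro w' hw'
      by_cases hwv : w' = v c hc
      · rw [hwv]; exact hfv c hc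
      · have hadj : U.Adj (v c hc) w' :=
          hCclique c hc (Finset.mem_coe.mpr (hvmem c hc)) (Finset.mem_coe.mpr hw')
            (Ne.symm hwv)
        obtain ⟨d', hd', hvd', hwd'⟩ := hDcover hadj
        obtain ⟨c'', hc'', hde⟩ := hsurj d' hd'
        have hcc : c'' = c := by
          apply key c'' hc'' c hc d' hd' _ hvd'
          rw [hde]; exact hfv c'' hc''
        subst hcc
        rw [← hde]; exact hwd'
  -- conclude
  have hsub : D ⊆ C := by
    intro d hd
    obtain ⟨c, hc, hde⟩ := hsurj d hd
    rw [hde, hfc c hc]; exact hc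
  exact Finset.eq_of_subset_of_card_le hsub (le_of_eq hcard.symm)
end
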